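/- Two nonempty strings x, y over Z_q have a common descendant under palindromic (equivalently tandem) duplications of length 1 if and only if they have the same run-length signature, i.e., the same sequence of letters obtained by collapsing maximal runs of equal letters. -/

import Mathlib

/-- One palindromic duplication of length `k`: a `k`-factor `v` of `x`
gets a reversed copy inserted right after it. -/
def PalStep {q : ℕ} (k : ℕ) (x y : List (ZMod q)) : Prop :=
  ∃ u v w : List (ZMod q), v.length = k ∧ x = u ++ v ++ w ∧
    y = u ++ v ++ v.reverse ++ w

/-- Finitely many (possibly zero) palindromic duplications of length `k`. -/
def PalDerives {q : ℕ} (k : ℕ) : List (ZMod q) → List (ZMod q) → Prop :=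
  Relation.ReflTransGen (PalStep k)

section DestutterLemmas

variable {α : Type*} [DecidableEq α]

lemma destutter'_dup (a : α) :
    ∀ (u : List α) (b : α) (w : List α),
      List.destutter' (· ≠ ·) b (u ++ a :: a :: w)
        = List.destutter' (· ≠ ·) b (u ++ a :: w)
  | [], b, w => by
    by_cases hba : b ≠ a
    · rw [List.nil_append, List.nil_append, List.destutter'_cons_pos _ hba,
        List.destutter'_cons_pos _ hba,
        List.destutter'_cons_neg _ (by simp : ¬ a ≠ a)]
    · rw [List.nil_append, List.nil_append, List.destutter'_cons_neg _ hba,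
        List.destutter'_cons_neg _ hba]
  | c :: u, b, w => by
    rw [List.cons_append, List.cons_append, List.destutter'_cons,
      List.destutter'_cons]
    split_ifs with h
    · rw [destutter'_dup a u c w]
    · rw [destutter'_dup a u b w]

lemma destutter_dup (a : α) (u w : List α) :
    List.destutter (· ≠ ·) (u ++ a :: a :: w)
      = List.destutter (· ≠ ·) (u ++ a :: w) := by
  cases u with
  | nil =>
    rw [List.nil_append, List.nil_append, List.destutter_cons',
      List.destutter_cons', List.destutter'_cons_neg _ (by simp : ¬ a ≠ a)]
  | cons c u =>
    rw [List.cons_append, List.cons_append, List.destutter_cons',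
      List.destutter_cons', destutter'_dup a u c w]

lemma destutter'_replicate (a : α) (s : List α) :
    ∀ j : ℕ, List.destutter' (· ≠ ·) a (List.replicate j a ++ s)
      = List.destutter' (· ≠ ·) a s
  | 0 => rfl
  | j + 1 => by
    rw [List.replicate_succ, List.cons_append,
      List.destutter'_cons_neg _ (by simp : ¬ a ≠ a),
      destutter'_replicate a s j]

end DestutterLemmas

section StepLemmas

variable {q : ℕ}

lemma dropWhile_cons_not {α : Type*} {p : α → Bool} :
    ∀ (t : List α) (b : α) (s' : List α), t.dropWhile p = b :: s' → p b = false
  | [], b, s' => by simp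
  | c :: t', b, s' => by
    intro h
    rw [List.dropWhile_cons] at h
    split at h
    · exact dropWhile_cons_not t' b s' h
    · cases h; simp_all

lemma palStep_destutter {x y : List (ZMod q)} (h : PalStep 1 x y) :
    x.destutter (· ≠ ·) = y.destutter (· ≠ ·) := by
  obtain ⟨u, v, w, hv, hxe, hye⟩ := h
  obtain ⟨a, rfl⟩ : ∃ a, v = [a] := by
    cases v with
    | nil => simp at hv
    | cons a t =>
      cases t with
      | nil => exact ⟨a, rfl⟩
      | cons b t => simp at hv
  subst hxe hye
  have := destutter_dup a u w
  simpa using this.symm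

lemma palDerives_destutter {x y : List (ZMod q)} (h : PalDerives 1 x y) :
    x.destutter (· ≠ ·) = y.destutter (· ≠ ·) := by
  induction h with
  | refl => rfl
  | tail _ hstep ih => exact ih.trans (palStep_destutter hstep)

lemma palStep_append_left {k : ℕ} (p : List (ZMod q)) {x y : List (ZMod q)}
    (h : PalStep k x y) : PalStep k (p ++ x) (p ++ y) := by
  obtain ⟨u, v, w, hv, hxe, hye⟩ := h
  exact ⟨p ++ u, v, w, hv, by simp [hxe], by simp [hye]⟩

lemma palStep_append_right {k : ℕ} (s : List (ZMod q)) {x y : List (ZMod q)}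
    (h : PalStep k x y) : PalStep k (x ++ s) (y ++ s) := by
  obtain ⟨u, v, w, hv, hxe, hye⟩ := h
  exact ⟨u, v, w ++ s, hv, by simp [hxe], by simp [hye]⟩

lemma palDerives_append_left {k : ℕ} (p : List (ZMod q)) {x y : List (ZMod q)}
    (h : PalDerives k x y) : PalDerives k (p ++ x) (p ++ y) :=
  Relation.ReflTransGen.lift (p ++ ·) (fun _ _ hs => palStep_append_left p hs) _ _ h

lemma palDerives_append_right {k : ℕ} (s : List (ZMod q)) {x y : List (ZMod q)}
    (h : PalDerives k x y) : PalDerives k (x ++ s) (y ++ s) :=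
  Relation.ReflTransGen.lift (· ++ s) (fun _ _ hs => palStep_append_right s hs) _ _ h

lemma palStep_replicate (a : ZMod q) (k : ℕ) :
    PalStep 1 (List.replicate (k + 1) a) (List.replicate (k + 2) a) := by
  refine ⟨[], [a], List.replicate k a, rfl, by simp [List.replicate_succ], ?_⟩
  simp [List.replicate_succ]

lemma palDerives_replicate (a : ZMod q) {k N : ℕ} (hk : 1 ≤ k) (hN : k ≤ N) :
    PalDerives 1 (List.replicate k a) (List.replicate N a) := by
  induction N, hN using Nat.le_induction with
  | base => exact Relation.ReflTransGen.refl
  | succ n hn ih =>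
    refine ih.tail ?_
    obtain ⟨m, rfl⟩ : ∃ m, n = m + 1 := ⟨n - 1, by omega⟩
    exact palStep_replicate a m

lemma palDerives_pump : ∀ (x : List (ZMod q)), x ≠ [] → ∀ N, x.length ≤ N →
    PalDerives 1 x ((x.destutter (· ≠ ·)).flatMap (fun c => List.replicate N c))
  | [], h, _, _ => absurd rfl h
  | a :: t, _, N, hN => by
    set s := t.dropWhile (· = a) with hs
    have htw : t.takeWhile (· = a) = List.replicate (t.takeWhile (· = a)).length a :=
      List.eq_replicate_of_mem (fun b hb => by
        simpa using List.mem_takeWhile_imp hb)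
    have hts : t = List.replicate (t.takeWhile (· = a)).length a ++ s := by
      conv_lhs => rw [← List.takeWhile_append_dropWhile (p := (· = a)) (l := t)]
      rw [← htw]
    set m := (t.takeWhile (· = a)).length with hm
    have hxdec : a :: t = List.replicate (m + 1) a ++ s := by
      rw [List.replicate_succ, List.cons_append, ← hts]
    have hlen : (a :: t).length = m + 1 + s.length := by
      rw [hxdec]; simp
    have hdes : (a :: t).destutter (· ≠ ·) = List.destutter' (· ≠ ·) a s := by
      rw [List.destutter_cons', hts, destutter'_replicate]
    cases hsc : s with
    | nil =>
      rw [hdes, hsc, List.destutter'_nil]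
      have : PalDerives 1 (a :: t) (List.replicate N a) := by
        rw [hxdec, hsc, List.append_nil]
        exact palDerives_replicate a (by omega) (by omega)
      simpa using this
    | cons b s' =>
      have hba : b ≠ a := by
        have := dropWhile_cons_not t b s' (by rw [← hs, hsc])
        simpa using this
      have hdes2 : (a :: t).destutter (· ≠ ·) = a :: s.destutter (· ≠ ·) := by
        rw [hdes, hsc, List.destutter'_cons_pos _ (by simpa using hba.symm),
          List.destutter_cons']
      have hslen : s.length < (a :: t).length := by omega
      have ih := palDerives_pump s (by rw [hsc]; simp) N (by omega)
      have h1 : PalDerives 1 (a :: t) (List.replicate N a ++ s) := by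
        rw [hxdec]
        exact palDerives_append_right s (palDerives_replicate a (by omega) (by omega))
      have h2 : PalDerives 1 (List.replicate N a ++ s)
          (List.replicate N a ++ (s.destutter (· ≠ ·)).flatMap (fun c => List.replicate N c)) :=
        palDerives_append_left _ ih
      rw [hdes2]
      simpa [PalDerives] using h1.trans h2
termination_by x => x.length
decreasing_by
  simp only [List.length_cons]
  have := List.Sublist.length_le (List.dropWhile_sublist (l := t) (· = a))
  omega

end StepLemmas

/-- Two nonempty `q`-ary strings have a common descendant under length-1
palindromic (equivalently tandem) duplications iff they have the same
run-length signature (collapsing maximal runs of equal letters). -/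
theorem stmt15 {q : ℕ} (x y : List (ZMod q)) (hx : x ≠ []) (hy : y ≠ []) :
    (∃ z, PalDerives 1 x z ∧ PalDerives 1 y z) ↔
      x.destutter (· ≠ ·) = y.destutter (· ≠ ·) := by
  constructor
  · rintro ⟨z, hxz, hyz⟩
    rw [palDerives_destutter hxz, palDerives_destutter hyz]
  · intro h
    refine ⟨(x.destutter (· ≠ ·)).flatMap (fun c => List.replicate (max x.length y.length) c),
      palDerives_pump x hx _ (le_max_left _ _), ?_⟩
    rw [h]
    exact palDerives_pump y hy _ (le_max_right _ _)
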